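/- Fix θ ∈ (−π/4, π/4) with θ ≠ 0. The Lie algebra s = s(θ) is not isomorphic, as a complex Lie algebra, to the Heisenberg Lie algebra h(2). -/

import Mathlib

noncomputable section

/-!
The Lie algebra `s(θ)` of the Swanson model: the 5-dimensional complex Lie algebra
with basis `v₁, v₂, v₃, v₄, v` and brackets `[v₁,v₂] = [v₃,v₄] = v`,
`[v₁,v₄] = [v₃,v₂] = cos(2θ)·v`, `[v₁,v₃] = [v₄,v₂] = −i·sin(2θ)·v`, `[v,vⱼ] = 0`.
-/

/-- The underlying vector space of the Swanson Lie algebra `s(θ)`: a pair consisting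
of the coordinates along `v₁, v₂, v₃, v₄` and the coordinate along `v`. -/
def SwAlg (_θ : ℝ) : Type := (Fin 4 → ℂ) × ℂ

namespace SwAlg

variable {θ : ℝ}

instance : AddCommGroup (SwAlg θ) := inferInstanceAs (AddCommGroup ((Fin 4 → ℂ) × ℂ))
instance : Module ℂ (SwAlg θ) := inferInstanceAs (Module ℂ ((Fin 4 → ℂ) × ℂ))

/-- The alternating form encoding the structure constants of `s(θ)`. -/
def omega (θ : ℝ) (x y : (Fin 4 → ℂ) × ℂ) : ℂ :=
  ((x.1 0 * y.1 1 - x.1 1 * y.1 0) + (x.1 2 * y.1 3 - x.1 3 * y.1 2)) +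
    (Real.cos (2 * θ) : ℂ) *
      ((x.1 0 * y.1 3 - x.1 3 * y.1 0) + (x.1 2 * y.1 1 - x.1 1 * y.1 2)) +
    (-Complex.I * (Real.sin (2 * θ) : ℂ)) *
      ((x.1 0 * y.1 2 - x.1 2 * y.1 0) + (x.1 3 * y.1 1 - x.1 1 * y.1 3))

/-- The bracket of `s(θ)`: it takes values in the central line spanned by `v`. -/
def br (θ : ℝ) (x y : (Fin 4 → ℂ) × ℂ) : (Fin 4 → ℂ) × ℂ := ((0 : Fin 4 → ℂ), omega θ x y)

lemma br_add_left (x y z : (Fin 4 → ℂ) × ℂ) : br θ (x + y) z = br θ x z + br θ y z := by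
  simp only [br, omega, Prod.mk_add_mk, Prod.fst_add, Pi.add_apply, Prod.mk.injEq]
  constructor
  · simp
  · ring

lemma br_add_right (x y z : (Fin 4 → ℂ) × ℂ) : br θ x (y + z) = br θ x y + br θ x z := by
  simp only [br, omega, Prod.mk_add_mk, Prod.fst_add, Pi.add_apply, Prod.mk.injEq]
  constructor
  · simp
  · ring

lemma br_self (x : (Fin 4 → ℂ) × ℂ) : br θ x x = 0 := by
  simp only [br, omega]
  have h : (0 : (Fin 4 → ℂ) × ℂ) = ((0 : Fin 4 → ℂ), (0 : ℂ)) := rfl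
  rw [h, Prod.mk.injEq]
  constructor
  · rfl
  · ring

lemma br_leibniz (x y z : (Fin 4 → ℂ) × ℂ) :
    br θ x (br θ y z) = br θ (br θ x y) z + br θ y (br θ x z) := by
  simp only [br, omega, Prod.mk_add_mk, Pi.zero_apply, Prod.mk.injEq]
  constructor
  · simp
  · ring

lemma br_smul (c : ℂ) (x y : (Fin 4 → ℂ) × ℂ) : br θ x (c • y) = c • br θ x y := by
  simp only [br, omega, Prod.smul_mk, Prod.smul_fst, Pi.smul_apply, smul_eq_mul, smul_zero]
  rw [Prod.mk.injEq]
  constructor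
  · rfl
  · ring

instance : LieRing (SwAlg θ) where
  bracket x y := br θ x y
  add_lie x y z := br_add_left x y z
  lie_add x y z := br_add_right x y z
  lie_self x := br_self x
  leibniz_lie x y z := br_leibniz x y z

instance : LieAlgebra ℂ (SwAlg θ) where
  lie_smul c x y := br_smul c x y

/-- The basis vector `v₁`. -/
def v1 : SwAlg θ := ((Pi.single 0 1 : Fin 4 → ℂ), (0 : ℂ))
/-- The basis vector `v₂`. -/
def v2 : SwAlg θ := ((Pi.single 1 1 : Fin 4 → ℂ), (0 : ℂ))
/-- The basis vector `v₃`. -/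
def v3 : SwAlg θ := ((Pi.single 2 1 : Fin 4 → ℂ), (0 : ℂ))
/-- The basis vector `v₄`. -/
def v4 : SwAlg θ := ((Pi.single 3 1 : Fin 4 → ℂ), (0 : ℂ))
/-- The central basis vector `v`. -/
def vv : SwAlg θ := ((0 : Fin 4 → ℂ), (1 : ℂ))

end SwAlg

/-!
The Heisenberg Lie algebra `h(m)` over a commutative ring `R`: the
`(2m+1)`-dimensional Lie algebra with basis `v₁, ..., v_{2m}, v`, whose only
nonzero brackets among basis elements are `[v_{2i-1}, v_{2i}] = v = -[v_{2i}, v_{2i-1}]`.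
An element is encoded as `((p, q), t)` where `p i` is the coordinate along
`v_{2i-1}` (for `i = 1, ..., m`), `q i` is the coordinate along `v_{2i}`, and
`t` is the coordinate along the central element `v`.
-/

/-- The underlying module of the Heisenberg algebra `h(m)` over `R`. -/
def Heis (R : Type*) [CommRing R] (m : ℕ) : Type _ := ((Fin m → R) × (Fin m → R)) × R

namespace Heis

variable {R : Type*} [CommRing R] {m : ℕ}

instance : AddCommGroup (Heis R m) :=
  inferInstanceAs (AddCommGroup (((Fin m → R) × (Fin m → R)) × R))
instance : Module R (Heis R m) :=
  inferInstanceAs (Module R (((Fin m → R) × (Fin m → R)) × R))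

/-- The standard symplectic form encoding the structure constants of `h(m)`. -/
def omega (x y : ((Fin m → R) × (Fin m → R)) × R) : R :=
  ∑ i : Fin m, (x.1.1 i * y.1.2 i - x.1.2 i * y.1.1 i)

/-- The bracket of `h(m)`: it takes values in the central line spanned by `v`. -/
def br (x y : ((Fin m → R) × (Fin m → R)) × R) : ((Fin m → R) × (Fin m → R)) × R :=
  (0, omega x y)

lemma br_add_left (x y z : ((Fin m → R) × (Fin m → R)) × R) :
    br (x + y) z = br x z + br y z := by
  simp only [br, Prod.mk_add_mk, add_zero, Prod.mk.injEq, zero_add]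
  refine ⟨by simp, ?_⟩
  simp only [omega, ← Finset.sum_add_distrib, Prod.fst_add, Prod.snd_add, Pi.add_apply]
  exact Finset.sum_congr rfl fun i _ => by ring

lemma br_add_right (x y z : ((Fin m → R) × (Fin m → R)) × R) :
    br x (y + z) = br x y + br x z := by
  simp only [br, Prod.mk_add_mk, add_zero, Prod.mk.injEq, zero_add]
  refine ⟨by simp, ?_⟩
  simp only [omega, ← Finset.sum_add_distrib, Prod.fst_add, Prod.snd_add, Pi.add_apply]
  exact Finset.sum_congr rfl fun i _ => by ring

lemma omega_br_right (x y z : ((Fin m → R) × (Fin m → R)) × R) :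
    omega x (br y z) = 0 := by
  simp [omega, br]

lemma omega_br_left (x y z : ((Fin m → R) × (Fin m → R)) × R) :
    omega (br x y) z = 0 := by
  simp [omega, br]

lemma br_self (x : ((Fin m → R) × (Fin m → R)) × R) : br x x = 0 := by
  have h : omega x x = 0 := Finset.sum_eq_zero fun i _ => by ring
  simp [br, h, Prod.ext_iff]

lemma br_leibniz (x y z : ((Fin m → R) × (Fin m → R)) × R) :
    br x (br y z) = br (br x y) z + br y (br x z) := by
  show ((0, omega x (br y z)) : ((Fin m → R) × (Fin m → R)) × R) =
    (0, omega (br x y) z) + (0, omega y (br x z))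
  rw [omega_br_right, omega_br_left, omega_br_right]
  simp

lemma br_smul (c : R) (x y : ((Fin m → R) × (Fin m → R)) × R) :
    br x (c • y) = c • br x y := by
  have h : omega x (c • y) = c * omega x y := by
    simp only [omega, Finset.mul_sum, Prod.smul_fst, Prod.smul_snd, Pi.smul_apply, smul_eq_mul]
    exact Finset.sum_congr rfl fun i _ => by ring
  simp [br, h, Prod.ext_iff, smul_eq_mul]

instance : LieRing (Heis R m) where
  bracket x y := br x y
  add_lie x y z := br_add_left x y z
  lie_add x y z := br_add_right x y z
  lie_self x := br_self x
  leibniz_lie x y z := br_leibniz x y z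

instance : LieAlgebra R (Heis R m) where
  lie_smul c x y := br_smul c x y

/-- The basis vector `v_{2i-1}` of `h(m)`. -/
def vodd (i : Fin m) : Heis R m := (((Pi.single i 1 : Fin m → R), 0), 0)

/-- The basis vector `v_{2i}` of `h(m)`. -/
def veven (i : Fin m) : Heis R m := (((0 : Fin m → R), (Pi.single i 1 : Fin m → R)), 0)

/-- The central basis vector `v` of `h(m)`. -/
def vz : Heis R m := ((0, 0), 1)

end Heis

section Aux

variable {θ : ℝ}

/-- A central element of `Heis ℂ 2` has vanishing first component. -/
lemma Heis.central_fst {w : Heis ℂ 2} (h : ∀ y : Heis ℂ 2, ⁅w, y⁆ = 0) :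
    w.1 = 0 := by
  have h1 : ∀ i : Fin 2, w.1.1 i = 0 := by
    intro i
    have hb : Heis.br w (Heis.veven i) = 0 := h (Heis.veven i)
    have := congrArg Prod.snd hb
    fin_cases i <;>
      simpa [Heis.br, Heis.omega, Heis.veven, Fin.sum_univ_two, Pi.single_apply] using this
  have h2 : ∀ i : Fin 2, w.1.2 i = 0 := by
    intro i
    have hb : Heis.br w (Heis.vodd i) = 0 := h (Heis.vodd i)
    have := congrArg Prod.snd hb
    have h' : -(w.1.2 i) = 0 := by
      fin_cases i <;>
        simpa [Heis.br, Heis.omega, Heis.vodd, Fin.sum_univ_two, Pi.single_apply] using this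
    exact neg_eq_zero.mp h'
  ext i
  · exact h1 i
  · exact h2 i

/-- The degenerate direction of `s(θ)`. -/
def SwAlg.zrad (θ : ℝ) : SwAlg θ :=
  (![-(Real.cos (2 * θ) : ℂ), Complex.I * (Real.sin (2 * θ) : ℂ), 1, 0], 0)

lemma SwAlg.zrad_central (y : SwAlg θ) : ⁅SwAlg.zrad θ, y⁆ = 0 := by
  show SwAlg.br θ (SwAlg.zrad θ) y = 0
  have htrig : (Real.cos (2 * θ) : ℂ) ^ 2 + (Real.sin (2 * θ) : ℂ) ^ 2 = 1 := by
    have h := Real.sin_sq_add_cos_sq (2 * θ)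
    norm_cast
    linarith
  have h0 : (0 : SwAlg θ) = ((0 : Fin 4 → ℂ), (0 : ℂ)) := rfl
  show SwAlg.br θ (SwAlg.zrad θ) y = ((0 : Fin 4 → ℂ), (0 : ℂ))
  simp only [SwAlg.br, SwAlg.omega, SwAlg.zrad, Matrix.cons_val_zero, Matrix.cons_val_one,
    Matrix.head_cons, Matrix.cons_val_two, Matrix.tail_cons, Matrix.cons_val_three,
    Prod.mk.injEq, true_and]
  have hI : Complex.I ^ 2 = -1 := Complex.I_sq
  linear_combination y.1 3 * (Real.sin (2 * θ) : ℂ) ^ 2 * hI - y.1 3 * htrig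

lemma SwAlg.vv_central (y : SwAlg θ) : ⁅(SwAlg.vv : SwAlg θ), y⁆ = 0 := by
  show SwAlg.br θ SwAlg.vv y = 0
  have h0 : (0 : SwAlg θ) = ((0 : Fin 4 → ℂ), (0 : ℂ)) := rfl
  show SwAlg.br θ SwAlg.vv y = ((0 : Fin 4 → ℂ), (0 : ℂ))
  simp [SwAlg.br, SwAlg.omega, SwAlg.vv]

end Aux

/-- For `θ ∈ (−π/4, π/4)`, `θ ≠ 0`, the Lie algebra `s(θ)` is not
isomorphic, as a complex Lie algebra, to the Heisenberg Lie algebra `h(2)`. -/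
theorem swanson_not_iso_heisenberg (θ : ℝ) (hθ₁ : -(Real.pi / 4) < θ)
    (hθ₂ : θ < Real.pi / 4) (hθ₀ : θ ≠ 0) :
    IsEmpty (SwAlg θ ≃ₗ⁅ℂ⁆ Heis ℂ 2) := by
  constructor
  intro φ
  -- images of the two central elements are central in `Heis ℂ 2`
  have hcent : ∀ x : SwAlg θ, (∀ y : SwAlg θ, ⁅x, y⁆ = 0) → (φ x).1 = 0 := by
    intro x hx
    refine Heis.central_fst fun y => ?_
    have : ⁅φ x, φ (φ.symm y)⁆ = 0 := by
      rw [← LieEquiv.map_lie, hx]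
      exact φ.toLinearEquiv.map_zero
    simpa using this
  have hz1 : (φ (SwAlg.zrad θ)).1 = 0 := hcent _ SwAlg.zrad_central
  have hv1 : (φ (SwAlg.vv : SwAlg θ)).1 = 0 := hcent _ SwAlg.vv_central
  set t : ℂ := (φ (SwAlg.zrad θ)).2 with ht
  set u : ℂ := (φ (SwAlg.vv : SwAlg θ)).2 with hu
  -- `u ≠ 0` since `vv ≠ 0`
  have hvvne : (SwAlg.vv : SwAlg θ) ≠ 0 := by
    intro h
    have := congrArg Prod.snd h
    simp [SwAlg.vv] at this
    exact one_ne_zero this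
  have hune : u ≠ 0 := by
    intro h
    apply hvvne
    have hzero : φ (SwAlg.vv : SwAlg θ) = 0 := by
      have e : φ (SwAlg.vv : SwAlg θ) =
          ((φ (SwAlg.vv : SwAlg θ)).1, (φ (SwAlg.vv : SwAlg θ)).2) := rfl
      rw [e, hv1, ← hu, h]; rfl
    have h00 : φ (0 : SwAlg θ) = 0 := φ.toLinearEquiv.map_zero
    exact φ.injective (hzero.trans h00.symm)
  -- the combination `u • zrad - t • vv` maps to zero, hence is zero
  have hcomb : φ (u • SwAlg.zrad θ - t • (SwAlg.vv : SwAlg θ)) = 0 := by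
    have hlin : ∀ z : SwAlg θ, φ z = φ.toLinearEquiv z := fun _ => rfl
    rw [hlin, map_sub, map_smul, map_smul, ← hlin, ← hlin]
    have e1 : φ (SwAlg.zrad θ) = ((0 : (Fin 2 → ℂ) × (Fin 2 → ℂ)), t) := by
      rw [ht]; exact Prod.ext hz1 rfl
    have e2 : φ (SwAlg.vv : SwAlg θ) = ((0 : (Fin 2 → ℂ) × (Fin 2 → ℂ)), u) := by
      rw [hu]; exact Prod.ext hv1 rfl
    rw [e1, e2]
    show (u • (((0 : (Fin 2 → ℂ) × (Fin 2 → ℂ)), t) : Heis ℂ 2)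
        - t • (((0 : (Fin 2 → ℂ) × (Fin 2 → ℂ)), u) : Heis ℂ 2)) = 0
    have : (0 : Heis ℂ 2) = (((0 : (Fin 2 → ℂ) × (Fin 2 → ℂ)), (0 : ℂ)) : Heis ℂ 2) := rfl
    show ((u • ((0 : (Fin 2 → ℂ) × (Fin 2 → ℂ)), t) - t • ((0 : (Fin 2 → ℂ) × (Fin 2 → ℂ)), u) : ((Fin 2 → ℂ) × (Fin 2 → ℂ)) × ℂ)) = (((0 : (Fin 2 → ℂ) × (Fin 2 → ℂ)), (0 : ℂ)) : ((Fin 2 → ℂ) × (Fin 2 → ℂ)) × ℂ)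
    rw [Prod.smul_mk, Prod.smul_mk, Prod.mk_sub_mk, Prod.mk.injEq]
    constructor
    · simp
    · simp [mul_comm]
  have hzero : u • SwAlg.zrad θ - t • (SwAlg.vv : SwAlg θ) = 0 := by
    have h00 : φ (0 : SwAlg θ) = 0 := φ.toLinearEquiv.map_zero
    exact φ.injective (hcomb.trans h00.symm)
  -- but the first component of that combination at index 2 is `u ≠ 0`
  have h1 : u * 1 - t * 0 = 0 := congrArg (fun x : SwAlg θ => x.1 2) hzero
  apply hune
  linear_combination h1
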